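/- Let $\mathcal{C}$ be an abelian category and $X\colon \mathcal{C}\to\mathcal{C}$ an exact, locally nilpotent functor. For every object $\mathsf{M} = (M, h_{\mathsf{M}})$ of the Eilenberg–Moore category $\mathcal{C}^{T(X)}$ of the free monad, the sequence $0 \to f_! X(M) \xrightarrow{\iota_M - f_!(h_{\mathsf{M}})} f_!(M) \xrightarrow{\varepsilon_{\mathsf{M}}} \mathsf{M} \to 0$ is exact in $\mathcal{C}^{T(X)}$, and becomes split exact after applying the forgetful functor $f^*$. -/

import Mathlib

open CategoryTheory Limits

universe v u

variable {C : Type u} [Category.{v} C]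

/-- The power `X^n` of an endofunctor, with `X^(n+1) = X^n ⋙ X`. -/
def fpow (X : C ⥤ C) : ℕ → (C ⥤ C)
  | 0 => 𝟭 C
  | n + 1 => fpow X n ⋙ X

/-- `X` is locally nilpotent if every object is annihilated by some power of `X`. -/
def LocallyNilpotent (X : C ⥤ C) : Prop :=
  ∀ M : C, ∃ n : ℕ, IsZero ((fpow X n).obj M)

/-- The category `(X ⇓ Id)` of `X`-modules, identified with the Eilenberg–Moore category
of the free monad on `X`. -/
structure XMod (X : C ⥤ C) : Type max u v where
  carrier : C
  str : X.obj carrier ⟶ carrier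

/-- Morphisms of `X`-modules. -/
@[ext]
structure XModHom {X : C ⥤ C} (M N : XMod X) : Type v where
  hom : M.carrier ⟶ N.carrier
  comm : M.str ≫ hom = X.map hom ≫ N.str

instance (X : C ⥤ C) : Category (XMod X) where
  Hom := XModHom
  id M := ⟨𝟙 M.carrier, by simp⟩
  comp f g := ⟨f.hom ≫ g.hom, by
    rw [← Category.assoc, f.comm, Category.assoc, g.comm, ← Category.assoc, ← Functor.map_comp]⟩
  id_comp f := by apply XModHom.ext; simp [CategoryStruct.id, CategoryStruct.comp]
  comp_id f := by apply XModHom.ext; simp [CategoryStruct.id, CategoryStruct.comp]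
  assoc f g h := by apply XModHom.ext; simp [CategoryStruct.comp]

@[simp] lemma XMod.id_hom {X : C ⥤ C} (M : XMod X) : (𝟙 M : XModHom M M).hom = 𝟙 M.carrier := rfl
@[simp] lemma XMod.comp_hom {X : C ⥤ C} {M N P : XMod X} (f : M ⟶ N) (g : N ⟶ P) :
    (f ≫ g).hom = f.hom ≫ g.hom := rfl

/-- `F` is the free `X`-module `f₁(N)` on `N`, encoded via the universal
property of the free–forgetful adjunction `f₁ ⊣ f⋆`. -/
structure IsFreeXModOn (X : C ⥤ C) (F : XMod X) (N : C) where
  unit : N ⟶ F.carrier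
  lift : ∀ (P : XMod X), (N ⟶ P.carrier) → (F ⟶ P)
  fac : ∀ (P : XMod X) (g : N ⟶ P.carrier), unit ≫ (lift P g).hom = g
  uniq : ∀ (P : XMod X) (g : N ⟶ P.carrier) (k : F ⟶ P), unit ≫ k.hom = g → k = lift P g

variable [Abelian C] {X : C ⥤ C} [X.Additive]

instance {M N : XMod X} : Zero (XModHom M N) := ⟨⟨0, by simp⟩⟩
instance {M N : XMod X} : Add (XModHom M N) :=
  ⟨fun f g => ⟨f.hom + g.hom, by
    simp [Preadditive.comp_add, Preadditive.add_comp, f.comm, g.comm]⟩⟩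
instance {M N : XMod X} : Neg (XModHom M N) :=
  ⟨fun f => ⟨-f.hom, by simp [Preadditive.comp_neg, Preadditive.neg_comp, f.comm]⟩⟩

instance {M N : XMod X} : AddCommGroup (XModHom M N) where
  add_assoc f g h := by apply XModHom.ext; exact add_assoc _ _ _
  zero_add f := by apply XModHom.ext; exact zero_add _
  add_zero f := by apply XModHom.ext; exact add_zero _
  add_comm f g := by apply XModHom.ext; exact add_comm _ _
  neg_add_cancel f := by apply XModHom.ext; exact neg_add_cancel _
  nsmul := nsmulRec
  zsmul := zsmulRec

instance : Preadditive (XMod X) where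
  homGroup M N := inferInstanceAs (AddCommGroup (XModHom M N))
  add_comp M N P f g h := by apply XModHom.ext; exact Preadditive.add_comp _ _ _ _ _ _
  comp_add M N P f g h := by apply XModHom.ext; exact Preadditive.comp_add _ _ _ _ _ _

@[simp] lemma XMod.zero_hom (M N : XMod X) : (0 : M ⟶ N).hom = 0 := rfl
@[simp] lemma XMod.add_hom {M N : XMod X} (f g : M ⟶ N) : (f + g).hom = f.hom + g.hom := rfl

/-- `X.map biprod.inl` and `X.map biprod.inr` are jointly epic for an additive functor. -/
lemma X_jointEpi {A B Z : C} (u v : X.obj (A ⊞ B) ⟶ Z)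
    (h1 : X.map biprod.inl ≫ u = X.map biprod.inl ≫ v)
    (h2 : X.map biprod.inr ≫ u = X.map biprod.inr ≫ v) : u = v := by
  have key : ∀ w : X.obj (A ⊞ B) ⟶ Z,
      w = X.map biprod.fst ≫ (X.map biprod.inl ≫ w) +
        X.map biprod.snd ≫ (X.map biprod.inr ≫ w) := by
    intro w
    rw [← Category.assoc, ← Category.assoc, ← X.map_comp, ← X.map_comp,
      ← Preadditive.add_comp, ← X.map_add, biprod.total, X.map_id, Category.id_comp]
  rw [key u, key v, h1, h2]

/-- The twisted module structure on `FXM.carrier ⊞ M.carrier`, which will turn out to be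
free on `M.carrier`. -/
@[reducible] noncomputable def Wmod (M FXM : XMod X) (hFXM : IsFreeXModOn X FXM (X.obj M.carrier)) : XMod X where
  carrier := FXM.carrier ⊞ M.carrier
  str := X.map biprod.fst ≫ FXM.str ≫ biprod.inl +
    X.map biprod.snd ≫ (hFXM.unit ≫ biprod.inl + M.str ≫ biprod.inr)

lemma Wmod_str_inl (M FXM : XMod X) (hFXM : IsFreeXModOn X FXM (X.obj M.carrier)) :
    X.map biprod.inl ≫ (Wmod M FXM hFXM).str = FXM.str ≫ biprod.inl := by
  simp only [Wmod, Preadditive.comp_add, ← Category.assoc, ← X.map_comp,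
    biprod.inl_fst, biprod.inl_snd, X.map_id, X.map_zero, Category.id_comp,
    zero_comp, add_zero]

lemma Wmod_str_inr (M FXM : XMod X) (hFXM : IsFreeXModOn X FXM (X.obj M.carrier)) :
    X.map biprod.inr ≫ (Wmod M FXM hFXM).str =
      hFXM.unit ≫ biprod.inl + M.str ≫ biprod.inr := by
  simp only [Wmod, Preadditive.comp_add, ← Category.assoc, ← X.map_comp,
    biprod.inr_fst, biprod.inr_snd, X.map_id, X.map_zero, Category.id_comp,
    zero_comp, zero_add]

/-- The twisted module `Wmod` is free on `M.carrier`, with unit `biprod.inr`. -/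
@[reducible] noncomputable def WmodFree (M FXM : XMod X) (hFXM : IsFreeXModOn X FXM (X.obj M.carrier)) :
    IsFreeXModOn X (Wmod M FXM hFXM) M.carrier where
  unit := biprod.inr
  lift P g :=
    { hom := biprod.desc (hFXM.lift P (X.map g ≫ P.str - M.str ≫ g)).hom g
      comm := by
        apply X_jointEpi
        · rw [← Category.assoc, Wmod_str_inl, Category.assoc, biprod.inl_desc,
            ← Category.assoc, ← X.map_comp, biprod.inl_desc,
            (hFXM.lift P (X.map g ≫ P.str - M.str ≫ g)).comm]
        · rw [← Category.assoc, Wmod_str_inr, Preadditive.add_comp,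
            Category.assoc, Category.assoc, biprod.inl_desc, biprod.inr_desc,
            hFXM.fac, ← Category.assoc, ← X.map_comp, biprod.inr_desc]
          abel }
  fac P g := biprod.inr_desc _ _
  uniq P g k hk := by
    have h1 : FXM.str ≫ (biprod.inl ≫ k.hom) =
        X.map (biprod.inl ≫ k.hom) ≫ P.str := by
      have e1 : X.map biprod.inl ≫ (Wmod M FXM hFXM).str ≫ k.hom
          = (FXM.str ≫ biprod.inl) ≫ k.hom := by
        rw [← Category.assoc, Wmod_str_inl]
      rw [k.comm] at e1
      calc FXM.str ≫ (biprod.inl ≫ k.hom) = (FXM.str ≫ biprod.inl) ≫ k.hom := by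
            rw [Category.assoc]
        _ = X.map biprod.inl ≫ X.map k.hom ≫ P.str := e1.symm
        _ = X.map (biprod.inl ≫ k.hom) ≫ P.str := by
            rw [X.map_comp, Category.assoc]
    have h2 : hFXM.unit ≫ (biprod.inl ≫ k.hom) = X.map g ≫ P.str - M.str ≫ g := by
      have e1 : X.map biprod.inr ≫ (Wmod M FXM hFXM).str ≫ k.hom
          = (hFXM.unit ≫ biprod.inl + M.str ≫ biprod.inr) ≫ k.hom := by
        rw [← Category.assoc, Wmod_str_inr]
      rw [k.comm, ← Category.assoc, ← X.map_comp, hk, Preadditive.add_comp,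
        Category.assoc, Category.assoc, hk] at e1
      rw [e1]
      abel
    have hK : XModHom.mk (biprod.inl ≫ k.hom) h1 =
        hFXM.lift P (X.map g ≫ P.str - M.str ≫ g) :=
      hFXM.uniq P _ _ h2
    apply XModHom.ext
    apply biprod.hom_ext'
    · have := congrArg XModHom.hom hK
      simpa [biprod.inl_desc] using this
    · simpa [biprod.inr_desc] using hk

@[simp] lemma WmodFree_unit (M FXM : XMod X) (hFXM : IsFreeXModOn X FXM (X.obj M.carrier)) :
    (WmodFree M FXM hFXM).unit = biprod.inr := rfl

/-- The key construction: a retraction `r` of `d.hom` satisfying the splitting identity. -/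
lemma splitting_core (M FM FXM : XMod X)
    (hFM : IsFreeXModOn X FM M.carrier) (hFXM : IsFreeXModOn X FXM (X.obj M.carrier))
    (d : FXM ⟶ FM) (ε : FM ⟶ M)
    (hd : hFXM.unit ≫ d.hom = X.map hFM.unit ≫ FM.str - M.str ≫ hFM.unit)
    (hε : hFM.unit ≫ ε.hom = 𝟙 M.carrier) :
    ∃ r : FM.carrier ⟶ FXM.carrier,
      d.hom ≫ r = 𝟙 FXM.carrier ∧ r ≫ d.hom + ε.hom ≫ hFM.unit = 𝟙 FM.carrier := by
  have φcomm : (Wmod M FXM hFXM).str ≫ biprod.desc d.hom hFM.unit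
      = X.map (biprod.desc d.hom hFM.unit) ≫ FM.str := by
    apply X_jointEpi
    · rw [← Category.assoc, Wmod_str_inl, Category.assoc, biprod.inl_desc,
        ← Category.assoc, ← X.map_comp, biprod.inl_desc, d.comm]
    · rw [← Category.assoc, Wmod_str_inr, Preadditive.add_comp,
        Category.assoc, Category.assoc, biprod.inl_desc, biprod.inr_desc,
        hd, ← Category.assoc, ← X.map_comp, biprod.inr_desc]
      abel
  let φ : Wmod M FXM hFXM ⟶ FM := ⟨biprod.desc d.hom hFM.unit, φcomm⟩
  let ψ : FM ⟶ Wmod M FXM hFXM := hFM.lift _ biprod.inr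
  have hψhom : hFM.unit ≫ ψ.hom = biprod.inr := hFM.fac _ _
  have hψφ : ψ ≫ φ = 𝟙 FM := by
    have ha : hFM.unit ≫ (ψ ≫ φ).hom = hFM.unit := by
      rw [XMod.comp_hom, ← Category.assoc, hψhom]
      exact biprod.inr_desc _ _
    have hb : hFM.unit ≫ (𝟙 FM : XModHom FM FM).hom = hFM.unit := by simp
    exact (hFM.uniq FM hFM.unit _ ha).trans (hFM.uniq FM hFM.unit _ hb).symm
  have hφψ : φ ≫ ψ = 𝟙 (Wmod M FXM hFXM) := by
    have ha : (WmodFree M FXM hFXM).unit ≫ (φ ≫ ψ).hom = biprod.inr := by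
      rw [WmodFree_unit, XMod.comp_hom, ← Category.assoc]
      have : (biprod.inr : M.carrier ⟶ _) ≫ φ.hom = hFM.unit := biprod.inr_desc _ _
      rw [this, hψhom]
    have hb : (WmodFree M FXM hFXM).unit ≫ (𝟙 (Wmod M FXM hFXM) : XModHom _ _).hom = biprod.inr := by simp
    exact ((WmodFree M FXM hFXM).uniq _ biprod.inr _ ha).trans
      ((WmodFree M FXM hFXM).uniq (Wmod M FXM hFXM) biprod.inr (𝟙 (Wmod M FXM hFXM)) hb).symm
  have sndcomm : (Wmod M FXM hFXM).str ≫ biprod.snd = X.map biprod.snd ≫ M.str := by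
    apply X_jointEpi
    · rw [← Category.assoc, Wmod_str_inl, Category.assoc, biprod.inl_snd, comp_zero,
        ← Category.assoc, ← X.map_comp, biprod.inl_snd, X.map_zero, zero_comp]
    · rw [← Category.assoc, Wmod_str_inr, Preadditive.add_comp,
        Category.assoc, Category.assoc, biprod.inl_snd, biprod.inr_snd, comp_zero,
        zero_add, Category.comp_id, ← Category.assoc, ← X.map_comp, biprod.inr_snd, X.map_id, Category.id_comp]
  have hεψ : ψ.hom ≫ biprod.snd = ε.hom := by
    have ha : hFM.unit ≫ (ψ ≫ (⟨biprod.snd, sndcomm⟩ : Wmod M FXM hFXM ⟶ M)).hom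
        = 𝟙 M.carrier := by
      rw [XMod.comp_hom, ← Category.assoc, hψhom]
      exact biprod.inr_snd
    have := (hFM.uniq M (𝟙 M.carrier) _ ha).trans (hFM.uniq M (𝟙 M.carrier) ε hε).symm
    exact congrArg XModHom.hom this
  have hφψhom : φ.hom ≫ ψ.hom = 𝟙 (Wmod M FXM hFXM).carrier := congrArg XModHom.hom hφψ
  have hψφhom : ψ.hom ≫ φ.hom = 𝟙 FM.carrier := congrArg XModHom.hom hψφ
  have hdφ : d.hom = biprod.inl ≫ φ.hom := (biprod.inl_desc _ _).symm
  refine ⟨ψ.hom ≫ biprod.fst, ?_, ?_⟩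
  · rw [hdφ, Category.assoc, ← Category.assoc φ.hom, hφψhom, Category.id_comp, biprod.inl_fst]
  · have htot : (biprod.fst : FXM.carrier ⊞ M.carrier ⟶ _) ≫ biprod.inl
        = 𝟙 _ - biprod.snd ≫ biprod.inr := by
      rw [eq_sub_iff_add_eq]; exact biprod.total
    have hinrφ : (biprod.inr : M.carrier ⟶ _) ≫ φ.hom = hFM.unit := biprod.inr_desc _ _
    have e1 : (biprod.fst : FXM.carrier ⊞ M.carrier ⟶ _) ≫ biprod.inl ≫ φ.hom
        = φ.hom - biprod.snd ≫ hFM.unit := by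
      rw [← Category.assoc, htot, Preadditive.sub_comp, Category.id_comp,
        Category.assoc, hinrφ]
    have e2 : (ψ.hom ≫ biprod.fst) ≫ d.hom = 𝟙 FM.carrier - ε.hom ≫ hFM.unit := by
      rw [hdφ, Category.assoc, e1, Preadditive.comp_sub, hψφhom, ← Category.assoc, hεψ]
    rw [e2]
    abel

/-- Let `C` be abelian and `X` exact and locally nilpotent. For every
`X`-module `M`, the canonical sequence
`0 ⟶ f₁(X M) ⟶ f₁(M) ⟶ M ⟶ 0`, where the first map is `ι_M - f₁(h_M)` and the second is
the counit `ε_M` (here characterized by their defining equations on generators), is an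
exact sequence (a kernel-cokernel pair) in the Eilenberg–Moore category, and it becomes
split exact after applying the forgetful functor. -/
theorem standard_resolution_exact_and_objectwise_split
    [PreservesFiniteLimits X] [PreservesFiniteColimits X]
    (hX : LocallyNilpotent X) (M : XMod X)
    (FM FXM : XMod X)
    (hFM : IsFreeXModOn X FM M.carrier) (hFXM : IsFreeXModOn X FXM (X.obj M.carrier))
    (d : FXM ⟶ FM) (ε : FM ⟶ M)
    (hd : hFXM.unit ≫ d.hom = X.map hFM.unit ≫ FM.str - M.str ≫ hFM.unit)
    (hε : hFM.unit ≫ ε.hom = 𝟙 M.carrier) :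
    ∃ w : d ≫ ε = 0,
      Nonempty (IsLimit (KernelFork.ofι d w)) ∧
      Nonempty (IsColimit (CokernelCofork.ofπ ε w)) ∧
      Nonempty ((ShortComplex.mk d.hom ε.hom (congrArg XModHom.hom w)).Splitting) := by
  obtain ⟨r, hr1, hr2⟩ := splitting_core M FM FXM hFM hFXM d ε hd hε
  have hrd : r ≫ d.hom = 𝟙 FM.carrier - ε.hom ≫ hFM.unit := by
    rw [eq_sub_iff_add_eq]; exact hr2
  have w : d ≫ ε = 0 := by
    have h0 : hFXM.unit ≫ (d ≫ ε).hom = 0 := by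
      rw [XMod.comp_hom, ← Category.assoc, hd, Preadditive.sub_comp,
        Category.assoc, Category.assoc, ε.comm, hε, Category.comp_id,
        ← Category.assoc, ← X.map_comp, hε, X.map_id, Category.id_comp, sub_self]
    have h0' : hFXM.unit ≫ (0 : FXM ⟶ M).hom = 0 := by simp
    exact (hFXM.uniq M 0 _ h0).trans (hFXM.uniq M 0 _ h0').symm
  refine ⟨w, ⟨?_⟩, ⟨?_⟩, ⟨r, hFM.unit, hr1, hε, hr2⟩⟩
  · -- kernel
    refine KernelFork.IsLimit.ofι d w (fun {P} k hk => ⟨k.hom ≫ r, ?_⟩) ?_ ?_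
    · -- the lift is a module map
      have hk0 : k.hom ≫ ε.hom = 0 := by
        have := congrArg XModHom.hom hk
        simpa using this
      have cancel : ∀ {Z : C} (a b : Z ⟶ FXM.carrier),
          a ≫ d.hom = b ≫ d.hom → a = b := by
        intro Z a b h
        have := h =≫ r
        simpa only [Category.assoc, hr1, Category.comp_id] using this
      apply cancel
      calc (P.str ≫ k.hom ≫ r) ≫ d.hom
          = P.str ≫ k.hom ≫ (𝟙 FM.carrier - ε.hom ≫ hFM.unit) := by
            simp only [Category.assoc, hrd]
        _ = P.str ≫ k.hom := by
            rw [Preadditive.comp_sub, Category.comp_id, ← Category.assoc k.hom, hk0,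
              zero_comp, sub_zero]
        _ = X.map k.hom ≫ FM.str := k.comm
        _ = X.map (k.hom ≫ r ≫ d.hom) ≫ FM.str := by
            rw [hrd, Preadditive.comp_sub, Category.comp_id, ← Category.assoc k.hom, hk0,
              zero_comp, sub_zero]
        _ = (X.map (k.hom ≫ r) ≫ FXM.str) ≫ d.hom := by
            rw [← Category.assoc k.hom, X.map_comp, Category.assoc, ← d.comm,
              ← Category.assoc]
    · intro P k hk
      have hk0 : k.hom ≫ ε.hom = 0 := by
        have := congrArg XModHom.hom hk
        simpa using this
      apply XModHom.ext
      rw [XMod.comp_hom]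
      calc (k.hom ≫ r) ≫ d.hom = k.hom ≫ (𝟙 FM.carrier - ε.hom ≫ hFM.unit) := by
            simp only [Category.assoc, hrd]
        _ = k.hom := by
            rw [Preadditive.comp_sub, Category.comp_id, ← Category.assoc, hk0,
              zero_comp, sub_zero]
    · intro P k hk m hm
      apply XModHom.ext
      have := congrArg XModHom.hom hm
      rw [XMod.comp_hom] at this
      calc m.hom = m.hom ≫ d.hom ≫ r := by rw [hr1, Category.comp_id]
        _ = k.hom ≫ r := by rw [← Category.assoc, this]
  · -- cokernel
    refine CokernelCofork.IsColimit.ofπ ε w (fun {P} k hk => ⟨hFM.unit ≫ k.hom, ?_⟩) ?_ ?_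
    · -- the descent is a module map
      have h1 : d.hom ≫ k.hom = 0 := by
        have := congrArg XModHom.hom hk
        simpa using this
      have h2 : (X.map hFM.unit ≫ FM.str - M.str ≫ hFM.unit) ≫ k.hom = 0 := by
        rw [← hd, Category.assoc, h1, comp_zero]
      rw [Preadditive.sub_comp, sub_eq_zero] at h2
      calc M.str ≫ hFM.unit ≫ k.hom = (M.str ≫ hFM.unit) ≫ k.hom := by
            rw [Category.assoc]
        _ = (X.map hFM.unit ≫ FM.str) ≫ k.hom := h2.symm
        _ = X.map hFM.unit ≫ X.map k.hom ≫ P.str := by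
            rw [Category.assoc, k.comm]
        _ = X.map (hFM.unit ≫ k.hom) ≫ P.str := by
            rw [X.map_comp, Category.assoc]
    · intro P k hk
      refine ((hFM.uniq P (hFM.unit ≫ k.hom) _ ?_).trans
        (hFM.uniq P (hFM.unit ≫ k.hom) k rfl).symm)
      rw [XMod.comp_hom, ← Category.assoc, hε, Category.id_comp]
    · intro P k hk m hm
      apply XModHom.ext
      have := congrArg XModHom.hom hm
      rw [XMod.comp_hom] at this
      calc m.hom = (hFM.unit ≫ ε.hom) ≫ m.hom := by rw [hε, Category.id_comp]
        _ = hFM.unit ≫ k.hom := by rw [Category.assoc, this]
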